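/- In the setting of a cocommutative coalgebra extension ι : C → C̃ = C ⊕ X with symmetric 2-cocycle ω(x) = Σ ω₁(x)⊗ω₂(x), and an associative multiplication m : C → Hom(A⊗A,A), the obstruction ζ : X → Hom(A^{⊗3},A) defined by ζ(x) = Σ m(ω₁(x))∘(id_A⊗m(ω₂(x))) − Σ m(ω₁(x))∘(m(ω₂(x))⊗id_A) is a 3-cocycle in the complex C_X^*(A,m): d_X^3(ζ) = 0. -/
import Mathlib


open TensorProduct

noncomputable section

namespace DefCx2

variable {k : Type*} [Field k]
variable {A : Type*} [AddCommGroup A] [Module k A]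
variable {C : Type*} [AddCommGroup C] [Module k C] [Coalgebra k C]
variable {X : Type*} [AddCommGroup X] [Module k X]

/-- Convolution-associativity of `μ : D → Hom(A⊗A, A)` with respect to an (explicitly
given) comultiplication `Δ` on `D`:
`Σ μ(d₍₁₎)∘(μ(d₍₂₎)⊗A) = Σ μ(d₍₁₎)∘(A⊗μ(d₍₂₎))` as maps `(A⊗A)⊗A → A`. -/
def ConvAssocWith {D : Type*} [AddCommGroup D] [Module k D]
    (Δ : D →ₗ[k] D ⊗[k] D) (μ : D →ₗ[k] (A ⊗[k] A →ₗ[k] A)) : Prop :=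
  TensorProduct.lift (LinearMap.mk₂ k
      (fun d d' => (μ d) ∘ₗ LinearMap.rTensor A (μ d'))
      (by intro x y c; simp [map_add, LinearMap.add_comp])
      (by intro r x c; simp [map_smul, LinearMap.smul_comp])
      (by intro x c c'; simp [map_add, LinearMap.rTensor_add, LinearMap.comp_add])
      (by intro r x c; simp [map_smul, LinearMap.rTensor_smul, LinearMap.comp_smul])) ∘ₗ Δ
  =
  TensorProduct.lift (LinearMap.mk₂ k
      (fun d d' => (μ d) ∘ₗ LinearMap.lTensor A (μ d') ∘ₗ
        (TensorProduct.assoc k A A A).toLinearMap)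
      (by intro x y c; simp [map_add, LinearMap.add_comp])
      (by intro r x c; simp [map_smul, LinearMap.smul_comp])
      (by intro x c c'
          simp [map_add, LinearMap.lTensor_add, LinearMap.comp_add, LinearMap.add_comp])
      (by intro r x c
          simp [map_smul, LinearMap.lTensor_smul, LinearMap.comp_smul,
            LinearMap.smul_comp])) ∘ₗ Δ

/-- The degree-2 differential
`d²(ν)(x) = Σ m(x₍1₎)∘(A⊗ν(x₍0₎)) − Σ ν(x₍0₎)∘(m(x₍1₎)⊗A) + Σ ν(x₍0₎)∘(A⊗m(x₍1₎))
 − Σ m(x₍1₎)∘(ν(x₍0₎)⊗A)` as maps `(A⊗A)⊗A → A`. -/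
def d2 (ρ : X →ₗ[k] X ⊗[k] C) (m : C →ₗ[k] (A ⊗[k] A →ₗ[k] A))
    (ν : X →ₗ[k] (A ⊗[k] A →ₗ[k] A)) :
    X →ₗ[k] ((A ⊗[k] A) ⊗[k] A →ₗ[k] A) :=
  TensorProduct.lift (LinearMap.mk₂ k
    (fun x c =>
      (m c) ∘ₗ LinearMap.lTensor A (ν x) ∘ₗ (TensorProduct.assoc k A A A).toLinearMap
      - (ν x) ∘ₗ LinearMap.rTensor A (m c)
      + (ν x) ∘ₗ LinearMap.lTensor A (m c) ∘ₗ (TensorProduct.assoc k A A A).toLinearMap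
      - (m c) ∘ₗ LinearMap.rTensor A (ν x))
    (by intro x y c
        simp [map_add, LinearMap.lTensor_add, LinearMap.rTensor_add, LinearMap.add_comp,
          LinearMap.comp_add]
        abel)
    (by intro r x c
        simp [map_smul, LinearMap.lTensor_smul, LinearMap.rTensor_smul,
          LinearMap.smul_comp, LinearMap.comp_smul, smul_sub, smul_add])
    (by intro x c c'
        simp [map_add, LinearMap.lTensor_add, LinearMap.rTensor_add, LinearMap.add_comp,
          LinearMap.comp_add]
        abel)
    (by intro r x c
        simp [map_smul, LinearMap.lTensor_smul, LinearMap.rTensor_smul,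
          LinearMap.smul_comp, LinearMap.comp_smul, smul_sub, smul_add])) ∘ₗ ρ

/-- The identification `((A⊗A)⊗A)⊗A ≃ A⊗((A⊗A)⊗A)`. -/
def eA4first : (((A ⊗[k] A) ⊗[k] A) ⊗[k] A) ≃ₗ[k] A ⊗[k] ((A ⊗[k] A) ⊗[k] A) :=
  ((TensorProduct.assoc k (A ⊗[k] A) A A).trans
    (TensorProduct.assoc k A A (A ⊗[k] A))).trans
      (TensorProduct.congr (LinearEquiv.refl k A) (TensorProduct.assoc k A A A).symm)

/-- The degree-3 differential `d³ = Σ_{i=0}^{4} (−1)^i d_i³` of the complex `C_X^*(A,m)`,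
as maps `((A⊗A)⊗A)⊗A → A`. -/
def d3 (ρ : X →ₗ[k] X ⊗[k] C) (m : C →ₗ[k] (A ⊗[k] A →ₗ[k] A))
    (ν : X →ₗ[k] ((A ⊗[k] A) ⊗[k] A →ₗ[k] A)) :
    X →ₗ[k] (((A ⊗[k] A) ⊗[k] A) ⊗[k] A →ₗ[k] A) :=
  TensorProduct.lift (LinearMap.mk₂ k
    (fun x c =>
      (m c) ∘ₗ LinearMap.lTensor A (ν x) ∘ₗ (eA4first (k := k) (A := A)).toLinearMap
      - (ν x) ∘ₗ LinearMap.rTensor A (LinearMap.rTensor A (m c))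
      + (ν x) ∘ₗ LinearMap.rTensor A (LinearMap.lTensor A (m c)) ∘ₗ
          (TensorProduct.congr (TensorProduct.assoc k A A A)
            (LinearEquiv.refl k A)).toLinearMap
      - (ν x) ∘ₗ LinearMap.lTensor (A ⊗[k] A) (m c) ∘ₗ
          (TensorProduct.assoc k (A ⊗[k] A) A A).toLinearMap
      + (m c) ∘ₗ LinearMap.rTensor A (ν x))
    (by intro x y c
        simp [map_add, LinearMap.lTensor_add, LinearMap.rTensor_add, LinearMap.add_comp,
          LinearMap.comp_add]
        abel)
    (by intro r x c
        simp [map_smul, LinearMap.lTensor_smul, LinearMap.rTensor_smul,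
          LinearMap.smul_comp, LinearMap.comp_smul, smul_sub, smul_add])
    (by intro x c c'
        simp [map_add, LinearMap.lTensor_add, LinearMap.rTensor_add, LinearMap.add_comp,
          LinearMap.comp_add]
        abel)
    (by intro r x c
        simp [map_smul, LinearMap.lTensor_smul, LinearMap.rTensor_smul,
          LinearMap.smul_comp, LinearMap.comp_smul, smul_sub, smul_add])) ∘ₗ ρ

/-- The obstruction
`ζ(x) = Σ m(ω₁(x))∘(A⊗m(ω₂(x))) − Σ m(ω₁(x))∘(m(ω₂(x))⊗A)` as maps `(A⊗A)⊗A → A`. -/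
def zeta (ω : X →ₗ[k] C ⊗[k] C) (m : C →ₗ[k] (A ⊗[k] A →ₗ[k] A)) :
    X →ₗ[k] ((A ⊗[k] A) ⊗[k] A →ₗ[k] A) :=
  TensorProduct.lift (LinearMap.mk₂ k
    (fun c c' =>
      (m c) ∘ₗ LinearMap.lTensor A (m c') ∘ₗ (TensorProduct.assoc k A A A).toLinearMap
      - (m c) ∘ₗ LinearMap.rTensor A (m c'))
    (by intro x y c; simp [map_add, LinearMap.add_comp]; abel)
    (by intro r x c; simp [map_smul, LinearMap.smul_comp, smul_sub])
    (by intro x c c'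
        simp [map_add, LinearMap.lTensor_add, LinearMap.rTensor_add, LinearMap.comp_add,
          LinearMap.add_comp]
        abel)
    (by intro r x c
        simp [map_smul, LinearMap.lTensor_smul, LinearMap.rTensor_smul,
          LinearMap.comp_smul, LinearMap.smul_comp, smul_sub])) ∘ₗ ω

/-- The comultiplication on `C̃ = C ⊕ X` built from the comultiplication of `C`, a
symmetric coaction `ρ` on `X` and a symmetric 2-cocycle `ω : X → C ⊗ C`. -/
def extComul (ρ : X →ₗ[k] X ⊗[k] C) (ω : X →ₗ[k] C ⊗[k] C) :
    (C × X) →ₗ[k] (C × X) ⊗[k] (C × X) :=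
  TensorProduct.map (LinearMap.inl k C X) (LinearMap.inl k C X) ∘ₗ
      (Coalgebra.comul : C →ₗ[k] C ⊗[k] C) ∘ₗ LinearMap.fst k C X
    + TensorProduct.map (LinearMap.inl k C X) (LinearMap.inr k C X) ∘ₗ
      ((TensorProduct.comm k X C).toLinearMap ∘ₗ ρ) ∘ₗ LinearMap.snd k C X
    + TensorProduct.map (LinearMap.inr k C X) (LinearMap.inl k C X) ∘ₗ
      ρ ∘ₗ LinearMap.snd k C X
    + TensorProduct.map (LinearMap.inl k C X) (LinearMap.inl k C X) ∘ₗ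
      ω ∘ₗ LinearMap.snd k C X

end DefCx2

end

noncomputable section AuxObstr

open TensorProduct DefCx2

namespace AuxObstr

variable {k : Type*} [Field k]
variable {A : Type*} [AddCommGroup A] [Module k A]
variable {C : Type*} [AddCommGroup C] [Module k C]
variable {X : Type*} [AddCommGroup X] [Module k X]

/-- The bilinear pattern underlying `zeta`, without the precomposition by `ω`. -/
def zp (m : C →ₗ[k] (A ⊗[k] A →ₗ[k] A)) :
    C ⊗[k] C →ₗ[k] ((A ⊗[k] A) ⊗[k] A →ₗ[k] A) :=
  TensorProduct.lift (LinearMap.mk₂ k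
    (fun c c' =>
      (m c) ∘ₗ LinearMap.lTensor A (m c') ∘ₗ (TensorProduct.assoc k A A A).toLinearMap
      - (m c) ∘ₗ LinearMap.rTensor A (m c'))
    (by intro x y c; simp [map_add, LinearMap.add_comp]; abel)
    (by intro r x c; simp [map_smul, LinearMap.smul_comp, smul_sub])
    (by intro x c c'
        simp [map_add, LinearMap.lTensor_add, LinearMap.rTensor_add, LinearMap.comp_add,
          LinearMap.add_comp]
        abel)
    (by intro r x c
        simp [map_smul, LinearMap.lTensor_smul, LinearMap.rTensor_smul,
          LinearMap.comp_smul, LinearMap.smul_comp, smul_sub]))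

theorem zeta_eq (ω : X →ₗ[k] C ⊗[k] C) (m : C →ₗ[k] (A ⊗[k] A →ₗ[k] A)) :
    zeta ω m = zp m ∘ₗ ω := rfl

/-- The "outer" part of the degree-3 pattern: `Θ(w ⊗ y) = m(w)∘(A⊗zp(y)) + m(w)∘(zp(y)⊗A)`. -/
def Th (m : C →ₗ[k] (A ⊗[k] A →ₗ[k] A)) :
    C ⊗[k] (C ⊗[k] C) →ₗ[k] ((((A ⊗[k] A) ⊗[k] A) ⊗[k] A) →ₗ[k] A) :=
  TensorProduct.lift (LinearMap.mk₂ k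
    (fun w y =>
      m w ∘ₗ LinearMap.lTensor A (zp m y) ∘ₗ (eA4first (k := k) (A := A)).toLinearMap
      + m w ∘ₗ LinearMap.rTensor A (zp m y))
    (by intro x y c
        simp [map_add, LinearMap.add_comp]
        abel)
    (by intro r x c
        simp [map_smul, LinearMap.smul_comp, smul_add])
    (by intro x c c'
        simp [map_add, LinearMap.lTensor_add, LinearMap.rTensor_add, LinearMap.add_comp,
          LinearMap.comp_add]
        abel)
    (by intro r x c
        simp [map_smul, LinearMap.lTensor_smul, LinearMap.rTensor_smul,
          LinearMap.smul_comp, LinearMap.comp_smul, smul_add]))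

/-- `mpair(v ⊗ w) = m v ⊗ m w` as a map `(A⊗A)⊗(A⊗A) → A⊗A`. -/
def mpair (m : C →ₗ[k] (A ⊗[k] A →ₗ[k] A)) :
    C ⊗[k] C →ₗ[k] (((A ⊗[k] A) ⊗[k] (A ⊗[k] A)) →ₗ[k] (A ⊗[k] A)) :=
  TensorProduct.lift (LinearMap.mk₂ k
    (fun v w => TensorProduct.map (m v) (m w))
    (by intro x y c; simp [map_add, TensorProduct.map_add_left])
    (by intro r x c; simp [map_smul, TensorProduct.map_smul_left])
    (by intro x c c'; simp [map_add, TensorProduct.map_add_right])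
    (by intro r x c; simp [map_smul, TensorProduct.map_smul_right]))

/-- `K(u ⊗ (v ⊗ w))(((a⊗b)⊗d)⊗e) = m u (m v (a⊗b) ⊗ m w (d⊗e))`. -/
def Kp (m : C →ₗ[k] (A ⊗[k] A →ₗ[k] A)) :
    C ⊗[k] (C ⊗[k] C) →ₗ[k] ((((A ⊗[k] A) ⊗[k] A) ⊗[k] A) →ₗ[k] A) :=
  TensorProduct.lift (LinearMap.mk₂ k
    (fun u z => m u ∘ₗ mpair m z ∘ₗ (TensorProduct.assoc k (A ⊗[k] A) A A).toLinearMap)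
    (by intro x y c; simp [map_add, LinearMap.add_comp])
    (by intro r x c; simp [map_smul, LinearMap.smul_comp])
    (by intro x c c'; simp [map_add, LinearMap.comp_add, LinearMap.add_comp])
    (by intro r x c; simp [map_smul, LinearMap.comp_smul, LinearMap.smul_comp]))

/-- The "inner" part of the degree-3 pattern (the middle three coface terms). -/
def Q0 (m : C →ₗ[k] (A ⊗[k] A →ₗ[k] A)) :
    (C ⊗[k] C) ⊗[k] C →ₗ[k] ((((A ⊗[k] A) ⊗[k] A) ⊗[k] A) →ₗ[k] A) :=
  TensorProduct.lift (LinearMap.mk₂ k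
    (fun y w =>
      - (zp m y ∘ₗ LinearMap.rTensor A (LinearMap.rTensor A (m w)))
      + (zp m y ∘ₗ LinearMap.rTensor A (LinearMap.lTensor A (m w)) ∘ₗ
          (TensorProduct.congr (TensorProduct.assoc k A A A)
            (LinearEquiv.refl k A)).toLinearMap)
      - (zp m y ∘ₗ LinearMap.lTensor (A ⊗[k] A) (m w) ∘ₗ
          (TensorProduct.assoc k (A ⊗[k] A) A A).toLinearMap))
    (by intro x y c
        simp [map_add, LinearMap.add_comp]
        abel)
    (by intro r x c
        simp [map_smul, LinearMap.smul_comp, smul_sub, smul_add])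
    (by intro x c c'
        simp [map_add, LinearMap.lTensor_add, LinearMap.rTensor_add, LinearMap.add_comp,
          LinearMap.comp_add]
        abel)
    (by intro r x c
        simp [map_smul, LinearMap.lTensor_smul, LinearMap.rTensor_smul,
          LinearMap.smul_comp, LinearMap.comp_smul, smul_sub, smul_add]))

/-- The combination `−Θ + K − K∘(1⊗τ)`. -/
def Rp (m : C →ₗ[k] (A ⊗[k] A →ₗ[k] A)) :
    C ⊗[k] (C ⊗[k] C) →ₗ[k] ((((A ⊗[k] A) ⊗[k] A) ⊗[k] A) →ₗ[k] A) :=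
  - Th m + Kp m - Kp m ∘ₗ LinearMap.lTensor C (TensorProduct.comm k C C).toLinearMap

theorem zp_delta (Δ : C →ₗ[k] C ⊗[k] C) (m : C →ₗ[k] (A ⊗[k] A →ₗ[k] A))
    (hm : ConvAssocWith Δ m) : zp m ∘ₗ Δ = 0 := by
  have hsplit : zp (A := A) m =
      TensorProduct.lift (LinearMap.mk₂ k
        (fun d d' => (m d) ∘ₗ LinearMap.lTensor A (m d') ∘ₗ
          (TensorProduct.assoc k A A A).toLinearMap)
        (by intro x y c; simp [map_add, LinearMap.add_comp])
        (by intro r x c; simp [map_smul, LinearMap.smul_comp])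
        (by intro x c c'
            simp [map_add, LinearMap.lTensor_add, LinearMap.comp_add, LinearMap.add_comp])
        (by intro r x c
            simp [map_smul, LinearMap.lTensor_smul, LinearMap.comp_smul,
              LinearMap.smul_comp]))
      -
      TensorProduct.lift (LinearMap.mk₂ k
        (fun d d' => (m d) ∘ₗ LinearMap.rTensor A (m d'))
        (by intro x y c; simp [map_add, LinearMap.add_comp])
        (by intro r x c; simp [map_smul, LinearMap.smul_comp])
        (by intro x c c'; simp [map_add, LinearMap.rTensor_add, LinearMap.comp_add])
        (by intro r x c; simp [map_smul, LinearMap.rTensor_smul, LinearMap.comp_smul])) := by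
    apply TensorProduct.ext'
    intro c c'
    simp [zp]
  rw [hsplit, LinearMap.sub_comp, sub_eq_zero]
  exact hm.symm

theorem comm_rT {Y : Type*} [AddCommGroup Y] [Module k Y] (f : Y →ₗ[k] C ⊗[k] C) :
    (TensorProduct.comm k (C ⊗[k] C) C).toLinearMap ∘ₗ LinearMap.rTensor C f
      = LinearMap.lTensor C f ∘ₗ (TensorProduct.comm k Y C).toLinearMap := by
  apply TensorProduct.ext'
  intro y c
  simp

theorem d3_eq (ρ : X →ₗ[k] X ⊗[k] C) (ω : X →ₗ[k] C ⊗[k] C)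
    (m : C →ₗ[k] (A ⊗[k] A →ₗ[k] A)) :
    d3 ρ m (zeta ω m) =
      (Th m ∘ₗ (TensorProduct.comm k (C ⊗[k] C) C).toLinearMap + Q0 m) ∘ₗ
        LinearMap.rTensor C ω ∘ₗ ρ := by
  unfold d3
  rw [← LinearMap.comp_assoc]
  congr 1
  apply TensorProduct.ext'
  intro x c
  simp [Th, Q0, zeta, zp]
  abel

theorem Q0_eq (m : C →ₗ[k] (A ⊗[k] A →ₗ[k] A)) :
    Q0 m = Rp m ∘ₗ (TensorProduct.assoc k C C C).toLinearMap := by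
  apply TensorProduct.ext_threefold
  intro u v w
  apply TensorProduct.ext_fourfold
  intro a b d e
  simp [Q0, Rp, Th, Kp, mpair, zp, eA4first, TensorProduct.sub_tmul, TensorProduct.tmul_sub]
  abel

theorem Q0_rT (Δ : C →ₗ[k] C ⊗[k] C) (m : C →ₗ[k] (A ⊗[k] A →ₗ[k] A))
    (hzp : zp m ∘ₗ Δ = 0) :
    Q0 m ∘ₗ LinearMap.rTensor C Δ = 0 := by
  apply TensorProduct.ext'
  intro c c'
  have h0 : zp (A := A) m (Δ c) = 0 := by
    simpa using LinearMap.congr_fun hzp c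
  simp [Q0, h0]

theorem Th_lT (Δ : C →ₗ[k] C ⊗[k] C) (m : C →ₗ[k] (A ⊗[k] A →ₗ[k] A))
    (hzp : zp m ∘ₗ Δ = 0) :
    Th m ∘ₗ LinearMap.lTensor C Δ = 0 := by
  apply TensorProduct.ext'
  intro c c'
  have h0 : zp (A := A) m (Δ c') = 0 := by
    simpa using LinearMap.congr_fun hzp c'
  simp [Th, h0]

theorem Rp_lT {Y : Type*} [AddCommGroup Y] [Module k Y]
    (m : C →ₗ[k] (A ⊗[k] A →ₗ[k] A)) (f : Y →ₗ[k] C ⊗[k] C)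
    (hf : (TensorProduct.comm k C C).toLinearMap ∘ₗ f = f) :
    Rp m ∘ₗ LinearMap.lTensor C f = - (Th m ∘ₗ LinearMap.lTensor C f) := by
  have hK : (Kp m ∘ₗ LinearMap.lTensor C (TensorProduct.comm k C C).toLinearMap)
      ∘ₗ LinearMap.lTensor C f = Kp m ∘ₗ LinearMap.lTensor C f := by
    rw [LinearMap.comp_assoc, ← LinearMap.lTensor_comp, hf]
  unfold Rp
  rw [LinearMap.sub_comp, LinearMap.add_comp, LinearMap.neg_comp, hK]
  abel

end AuxObstr

end AuxObstr

open DefCx2 in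
/-- In the setting of a cocommutative coalgebra extension `C̃ = C ⊕ X` with
symmetric normalized 2-cocycle `ω` and a convolution-associative `m : C → Hom(A⊗A,A)`,
the obstruction `ζ(x) = Σ m(ω₁x)∘(A⊗m(ω₂x)) − Σ m(ω₁x)∘(m(ω₂x)⊗A)` is a 3-cocycle:
`d_X^3(ζ) = 0`. -/
theorem obstruction_is_three_cocycle {k : Type*} [Field k] {A C X : Type*}
    [AddCommGroup A] [Module k A]
    [AddCommGroup C] [Module k C] [Coalgebra k C]
    [AddCommGroup X] [Module k X]
    (hcocomm : (TensorProduct.comm k C C).toLinearMap ∘ₗ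
      (Coalgebra.comul : C →ₗ[k] C ⊗[k] C) = Coalgebra.comul)
    (ρ : X →ₗ[k] X ⊗[k] C)
    (hcoassoc : (TensorProduct.assoc k X C C).toLinearMap ∘ₗ LinearMap.rTensor C ρ ∘ₗ ρ =
      LinearMap.lTensor X (Coalgebra.comul : C →ₗ[k] C ⊗[k] C) ∘ₗ ρ)
    (hcounit : (TensorProduct.rid k X).toLinearMap ∘ₗ
      LinearMap.lTensor X (Coalgebra.counit : C →ₗ[k] k) ∘ₗ ρ = LinearMap.id)
    (ω : X →ₗ[k] C ⊗[k] C)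
    (hsymm : (TensorProduct.comm k C C).toLinearMap ∘ₗ ω = ω)
    (hnorm₁ : (TensorProduct.lid k C).toLinearMap ∘ₗ
      LinearMap.rTensor C (Coalgebra.counit : C →ₗ[k] k) ∘ₗ ω = 0)
    (hnorm₂ : (TensorProduct.rid k C).toLinearMap ∘ₗ
      LinearMap.lTensor C (Coalgebra.counit : C →ₗ[k] k) ∘ₗ ω = 0)
    (hcocycle : LinearMap.lTensor C ω ∘ₗ ((TensorProduct.comm k X C).toLinearMap ∘ₗ ρ)
      - (TensorProduct.assoc k C C C).toLinearMap ∘ₗ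
          LinearMap.rTensor C (Coalgebra.comul : C →ₗ[k] C ⊗[k] C) ∘ₗ ω
      + LinearMap.lTensor C (Coalgebra.comul : C →ₗ[k] C ⊗[k] C) ∘ₗ ω
      - (TensorProduct.assoc k C C C).toLinearMap ∘ₗ LinearMap.rTensor C ω ∘ₗ ρ = 0)
    (m : C →ₗ[k] (A ⊗[k] A →ₗ[k] A))
    (hm : ConvAssocWith (Coalgebra.comul : C →ₗ[k] C ⊗[k] C) m)
    :
    d3 ρ m (zeta ω m) = 0 := by
  have hzp : AuxObstr.zp (A := A) m ∘ₗ (Coalgebra.comul : C →ₗ[k] C ⊗[k] C) = 0 :=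
    AuxObstr.zp_delta _ m hm
  -- rearranged cocycle condition
  have hcoc : (TensorProduct.assoc k C C C).toLinearMap ∘ₗ LinearMap.rTensor C ω ∘ₗ ρ
      = LinearMap.lTensor C ω ∘ₗ ((TensorProduct.comm k X C).toLinearMap ∘ₗ ρ)
        - (TensorProduct.assoc k C C C).toLinearMap ∘ₗ
            LinearMap.rTensor C (Coalgebra.comul : C →ₗ[k] C ⊗[k] C) ∘ₗ ω
        + LinearMap.lTensor C (Coalgebra.comul : C →ₗ[k] C ⊗[k] C) ∘ₗ ω :=
    (sub_eq_zero.mp hcocycle).symm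
  rw [AuxObstr.d3_eq ρ ω m, LinearMap.add_comp]
  -- first summand
  have ht : (AuxObstr.Th (A := A) m ∘ₗ (TensorProduct.comm k (C ⊗[k] C) C).toLinearMap)
      ∘ₗ LinearMap.rTensor C ω ∘ₗ ρ
      = AuxObstr.Th (A := A) m ∘ₗ
          LinearMap.lTensor C ω ∘ₗ ((TensorProduct.comm k X C).toLinearMap ∘ₗ ρ) := by
    rw [LinearMap.comp_assoc]
    congr 1
    rw [← LinearMap.comp_assoc, ← LinearMap.comp_assoc, AuxObstr.comm_rT ω]
  -- second summand
  have hq : AuxObstr.Q0 (A := A) m ∘ₗ LinearMap.rTensor C ω ∘ₗ ρ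
      = - (AuxObstr.Th (A := A) m ∘ₗ
          LinearMap.lTensor C ω ∘ₗ ((TensorProduct.comm k X C).toLinearMap ∘ₗ ρ)) := by
    rw [AuxObstr.Q0_eq m, LinearMap.comp_assoc, hcoc, LinearMap.comp_add,
      LinearMap.comp_sub]
    -- the A₂ piece
    have h2 : AuxObstr.Rp (A := A) m ∘ₗ ((TensorProduct.assoc k C C C).toLinearMap ∘ₗ
        LinearMap.rTensor C (Coalgebra.comul : C →ₗ[k] C ⊗[k] C) ∘ₗ ω) = 0 := by
      rw [← LinearMap.comp_assoc _ _ (AuxObstr.Rp (A := A) m),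
        ← LinearMap.comp_assoc _ _ (AuxObstr.Rp (A := A) m ∘ₗ
          (TensorProduct.assoc k C C C).toLinearMap),
        ← AuxObstr.Q0_eq m, AuxObstr.Q0_rT _ m hzp, LinearMap.zero_comp]
    -- the A₃ piece
    have h3 : AuxObstr.Rp (A := A) m ∘ₗ
        (LinearMap.lTensor C (Coalgebra.comul : C →ₗ[k] C ⊗[k] C) ∘ₗ ω) = 0 := by
      rw [← LinearMap.comp_assoc _ _ (AuxObstr.Rp (A := A) m),
        AuxObstr.Rp_lT m _ hcocomm, AuxObstr.Th_lT _ m hzp, neg_zero,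
        LinearMap.zero_comp]
    -- the A₁ piece
    have h1 : AuxObstr.Rp (A := A) m ∘ₗ
        (LinearMap.lTensor C ω ∘ₗ ((TensorProduct.comm k X C).toLinearMap ∘ₗ ρ)) =
        - (AuxObstr.Th (A := A) m ∘ₗ
          LinearMap.lTensor C ω ∘ₗ ((TensorProduct.comm k X C).toLinearMap ∘ₗ ρ)) := by
      rw [← LinearMap.comp_assoc _ _ (AuxObstr.Rp (A := A) m),
        AuxObstr.Rp_lT m _ hsymm, LinearMap.neg_comp, LinearMap.comp_assoc]
    rw [h1, h2, h3]
    abel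
  rw [ht, hq]
  abel
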